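/- In the Galois group G = Gal(K/k) of an (infinite) Galois extension with the Krull topology, a subgroup H ≤ G equals Gal(K/K^H) if and only if H is closed in the Krull topology; in particular every subgroup of the form Gal(K/U) for an intermediate field U is closed. -/

import Mathlib

open IntermediateField

section Aux

variable {k K : Type*} [Field k] [Field K] [Algebra k K]

/-- If `σ` fixes `x`, then `σ` fixes every element of `k⟮x⟯`. -/
lemma fixes_adjoin_of_fixes (σ : K ≃ₐ[k] K) (x : K) (hx : σ x = x) :
    ∀ y ∈ IntermediateField.adjoin k ({x} : Set K), σ y = y := by
  intro y hy
  have hmem : (IntermediateField.adjoin k ({x} : Set K)) ≤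
      fixedField (Subgroup.zpowers σ) := by
    rw [IntermediateField.adjoin_le_iff]
    intro z hz
    rcases hz with rfl
    rintro ⟨g, m, rfl⟩
    show (σ ^ m) z = z
    have hpow : ∀ n : ℕ, (σ ^ n) z = z := by
      intro n
      induction n with
      | zero => rfl
      | succ n ih => rw [pow_succ, AlgEquiv.mul_apply, hx, ih]
    induction m using Int.rec with
    | ofNat n => simpa using hpow n
    | negSucc n =>
        have := hpow (n + 1)
        rw [zpow_negSucc]
        exact (AlgEquiv.symm_apply_eq _).mpr this.symm
  exact hmem hy ⟨σ, Subgroup.mem_zpowers σ⟩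

/-- Any fixing subgroup is closed in the Krull topology. -/
lemma fixingSubgroup_isClosed_of_isGalois [IsGalois k K] (U : IntermediateField k K) :
    IsClosed ((fixingSubgroup U : Subgroup (K ≃ₐ[k] K)) : Set (K ≃ₐ[k] K)) := by
  have hint : ∀ x : K, IsIntegral k x := fun x => Algebra.IsIntegral.isIntegral x
  have key : ((fixingSubgroup U : Subgroup (K ≃ₐ[k] K)) : Set (K ≃ₐ[k] K)) =
      ⋂ x : U, ((IntermediateField.adjoin k ({(x : K)} : Set K)).fixingSubgroup :
        Set (K ≃ₐ[k] K)) := by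
    ext σ
    simp only [Set.mem_iInter, SetLike.mem_coe]
    constructor
    · intro h x
      rw [IntermediateField.mem_fixingSubgroup_iff]
      exact fun y hy => fixes_adjoin_of_fixes σ x (h x) y hy
    · intro h x
      have := h x
      rw [IntermediateField.mem_fixingSubgroup_iff] at this
      exact this x (IntermediateField.mem_adjoin_simple_self k (x : K))
  rw [key]
  refine isClosed_iInter fun x => ?_
  have : FiniteDimensional k (IntermediateField.adjoin k ({(x : K)} : Set K)) :=
    IntermediateField.adjoin.finiteDimensional (hint (x : K))
  exact IntermediateField.fixingSubgroup_isClosed _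

/-- The key approximation: if `σ` fixes `fixedField H`, then for every
finite-dimensional intermediate field `E` there is `τ ∈ H` agreeing with `σ` on `E`. -/
lemma exists_approx [IsGalois k K] (H : Subgroup (K ≃ₐ[k] K)) (σ : K ≃ₐ[k] K)
    (hσ : σ ∈ fixingSubgroup (fixedField H)) (E : IntermediateField k K)
    [FiniteDimensional k E] : ∃ τ ∈ H, σ⁻¹ * τ ∈ fixingSubgroup E := by
  classical
  -- enlarge E to a finite Galois intermediate field L
  have hfg : E.FG := E.fg_of_fg_toSubalgebra
    (Subalgebra.fg_of_fg_toSubmodule (Module.Finite.iff_fg.mp ‹FiniteDimensional k E›))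
  obtain ⟨t, ht⟩ := hfg
  haveI : Finite (t : Set K) := t.finite_toSet.to_subtype
  let L : FiniteGaloisIntermediateField k K := FiniteGaloisIntermediateField.adjoin k (t : Set K)
  have hEL : E ≤ L.1 := by
    rw [← ht, IntermediateField.adjoin_le_iff]
    exact FiniteGaloisIntermediateField.subset_adjoin k _
  haveI : IsGalois k L.1 := L.isGalois
  haveI : Normal k L.1 := IsGalois.to_normal
  haveI : FiniteDimensional k L.1 := L.finiteDimensional
  -- restriction to L
  let r : (K ≃ₐ[k] K) →* (L.1 ≃ₐ[k] L.1) := AlgEquiv.restrictNormalHom L.1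
  let H' : Subgroup (L.1 ≃ₐ[k] L.1) := H.map r
  -- σ restricted lies in fixingSubgroup (fixedField H') = H'
  have hres : r σ ∈ H' := by
    rw [← IntermediateField.fixingSubgroup_fixedField H']
    rw [IntermediateField.mem_fixingSubgroup_iff]
    rintro y hy
    -- show σ fixes ↑y since ↑y ∈ fixedField H
    have hyK : (y : K) ∈ fixedField H := by
      intro τ
      have h2 : (r τ.1) y = y := hy ⟨r τ.1, ⟨τ.1, τ.2, rfl⟩⟩
      have hcomm : ((r τ.1) y : K) = τ.1 (y : K) :=
        AlgEquiv.restrictNormalHom_apply L.1 τ.1 y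
      show τ.1 (y : K) = (y : K)
      rw [← hcomm, h2]
    have hfix : σ (y : K) = (y : K) := hσ ⟨(y : K), hyK⟩
    have hcomm : ((r σ) y : K) = σ (y : K) := AlgEquiv.restrictNormalHom_apply L.1 σ y
    exact Subtype.ext (by rw [hcomm, hfix])
  obtain ⟨τ, hτH, hτ⟩ := hres
  refine ⟨τ, hτH, ?_⟩
  have : σ⁻¹ * τ ∈ fixingSubgroup L.1 := by
    rw [IntermediateField.mem_fixingSubgroup_iff]
    intro x hx
    have h1 : τ x = σ x := by
      have e1 : ((r τ) ⟨x, hx⟩ : K) = τ x := AlgEquiv.restrictNormalHom_apply L.1 τ ⟨x, hx⟩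
      have e2 : ((r σ) ⟨x, hx⟩ : K) = σ x := AlgEquiv.restrictNormalHom_apply L.1 σ ⟨x, hx⟩
      rw [← e1, ← e2, hτ]
    show σ⁻¹ (τ x) = x
    rw [h1]
    exact σ.symm_apply_apply x
  exact IntermediateField.fixingSubgroup_antitone hEL this

end Aux

/-- Krull's theorem: in `Gal(K/k)` of a Galois extension with the Krull topology,
a subgroup `H` satisfies `Gal(K/K^H) = H` iff `H` is closed; in particular every
subgroup of the form `Gal(K/U)` is closed. -/
theorem krull_closed_subgroup_correspondence
    (k K : Type*) [Field k] [Field K] [Algebra k K] [IsGalois k K] :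
    (∀ H : Subgroup (K ≃ₐ[k] K),
      fixingSubgroup (fixedField H) = H ↔ IsClosed (H : Set (K ≃ₐ[k] K))) ∧
    (∀ U : IntermediateField k K,
      IsClosed ((fixingSubgroup U : Subgroup (K ≃ₐ[k] K)) : Set (K ≃ₐ[k] K))) := by
  refine ⟨fun H => ⟨fun h => ?_, fun hclosed => ?_⟩, fun U => fixingSubgroup_isClosed_of_isGalois U⟩
  · rw [← h]
    exact fixingSubgroup_isClosed_of_isGalois _
  · apply le_antisymm
    · -- fixingSubgroup (fixedField H) ≤ H, using closedness
      intro σ hσ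
      have hcl : σ ∈ closure (H : Set (K ≃ₐ[k] K)) := by
        rw [mem_closure_iff]
        intro O hO hσO
        -- σ⁻¹ • O is an open nbhd of 1
        have hO' : IsOpen ((fun g => σ⁻¹ * g) '' O) := by
          have : (fun g => σ⁻¹ * g) '' O = (fun g => σ * g) ⁻¹' O := by
            ext g
            constructor
            · rintro ⟨a, ha, rfl⟩
              simpa using ha
            · intro hg
              exact ⟨σ * g, hg, by group⟩
          rw [this]
          exact hO.preimage (continuous_mul_left σ)
        have h1 : (1 : K ≃ₐ[k] K) ∈ (fun g => σ⁻¹ * g) '' O := ⟨σ, hσO, by group⟩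
        have hnhds : (fun g => σ⁻¹ * g) '' O ∈ nhds (1 : K ≃ₐ[k] K) := hO'.mem_nhds h1
        rw [krullTopology_mem_nhds_one_iff] at hnhds
        obtain ⟨E, hE, hsub⟩ := hnhds
        haveI := hE
        obtain ⟨τ, hτH, hτ⟩ := exists_approx H σ hσ E
        have : σ⁻¹ * τ ∈ (fun g => σ⁻¹ * g) '' O := hsub hτ
        obtain ⟨a, haO, ha⟩ := this
        have : a = τ := by
          have := mul_left_cancel ha
          exact this
        exact ⟨a, haO, this ▸ hτH⟩
      rwa [hclosed.closure_eq] at hcl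
    · exact (IntermediateField.le_iff_le H (fixedField H)).mp le_rfl
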